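/- Let F, F_k ∈ ℝ^{n×n} with F_k → F as k → ∞ and ρ(F) < 1. Then the time-varying system e(k) = F_k e(k−1) + u(k) with uniformly bounded inputs ‖u(k)‖ ≤ c_u satisfies ‖e(k)‖ ≤ a b^k + c for some constants a ≥ 0, 0 ≤ b < 1, c ≥ 0; in particular if u ≡ 0 then ‖e(k)‖ ≤ a b^k. -/

import Mathlib

open Matrix Filter Topology
open scoped ENNReal

lemma tv_entry_le (n : ℕ) (B : Matrix (Fin n) (Fin n) ℝ) (i j : Fin n) :
    |B i j| ≤ ‖toEuclideanCLM (𝕜 := ℂ) (B.map Complex.ofReal)‖ := by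
  set T := toEuclideanCLM (𝕜 := ℂ) (B.map Complex.ofReal)
  have h1 : ‖T (EuclideanSpace.single j 1)‖ ≤ ‖T‖ * ‖(EuclideanSpace.single j (1:ℂ) : EuclideanSpace ℂ (Fin n))‖ :=
    T.le_opNorm _
  rw [EuclideanSpace.norm_single, norm_one, mul_one] at h1
  refine le_trans ?_ h1
  set w : EuclideanSpace ℂ (Fin n) := T (EuclideanSpace.single j 1) with hw
  have h3 : ‖w i‖ ≤ ‖w‖ := by
    have := norm_inner_le_norm (𝕜 := ℂ) (EuclideanSpace.single i (1:ℂ)) w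
    rwa [EuclideanSpace.inner_single_left, EuclideanSpace.norm_single, norm_one, one_mul,
      RingHom.map_one, one_mul] at this
  refine le_trans (le_of_eq ?_) h3
  have h2 : w i = ((B.map Complex.ofReal).mulVec (Pi.single j 1)) i := rfl
  rw [h2, Matrix.mulVec_single]
  simp [Matrix.map_apply, Complex.norm_real]

lemma tv_mulVec_le (n : ℕ) (B : Matrix (Fin n) (Fin n) ℝ) (x : Fin n → ℝ) :
    ‖B.mulVec x‖ ≤ (n * ‖toEuclideanCLM (𝕜 := ℂ) (B.map Complex.ofReal)‖) * ‖x‖ := by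
  set c := ‖toEuclideanCLM (𝕜 := ℂ) (B.map Complex.ofReal)‖ with hc
  have hc0 : 0 ≤ c := norm_nonneg _
  rw [pi_norm_le_iff_of_nonneg (by positivity)]
  intro i
  rw [Matrix.mulVec, dotProduct]
  calc ‖∑ j, B i j * x j‖ ≤ ∑ j : Fin n, |B i j| * |x j| := by
        refine (norm_sum_le _ _).trans (Finset.sum_le_sum fun j _ => ?_)
        rw [Real.norm_eq_abs, abs_mul]
    _ ≤ ∑ j : Fin n, c * ‖x‖ := by
        refine Finset.sum_le_sum fun j _ => mul_le_mul (tv_entry_le n B i j) ?_ (abs_nonneg _) hc0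
        exact (Real.norm_eq_abs (x j)) ▸ norm_le_pi_norm x j
    _ = n * c * ‖x‖ := by simp [mul_assoc]

/-- Elementary bound: sup-norm of `A *ᵥ x` by the entrywise ℓ¹ sum. -/
lemma tv_mulVec_le' (n : ℕ) (A : Matrix (Fin n) (Fin n) ℝ) (x : Fin n → ℝ) :
    ‖A.mulVec x‖ ≤ (∑ i, ∑ j, |A i j|) * ‖x‖ := by
  have hgb : (0:ℝ) ≤ ∑ i, ∑ j, |A i j| :=
    Finset.sum_nonneg fun i _ => Finset.sum_nonneg fun j _ => abs_nonneg _
  rw [pi_norm_le_iff_of_nonneg (by positivity)]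
  intro i
  rw [Matrix.mulVec, dotProduct]
  calc ‖∑ j, A i j * x j‖ ≤ ∑ j : Fin n, |A i j| * |x j| := by
        refine (norm_sum_le _ _).trans (Finset.sum_le_sum fun j _ => ?_)
        rw [Real.norm_eq_abs, abs_mul]
    _ ≤ ∑ j : Fin n, |A i j| * ‖x‖ := by
        refine Finset.sum_le_sum fun j _ => mul_le_mul_of_nonneg_left ?_ (abs_nonneg _)
        exact (Real.norm_eq_abs (x j)) ▸ norm_le_pi_norm x j
    _ = (∑ j, |A i j|) * ‖x‖ := by rw [Finset.sum_mul]
    _ ≤ (∑ i, ∑ j, |A i j|) * ‖x‖ := by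
        refine mul_le_mul_of_nonneg_right ?_ (norm_nonneg x)
        exact Finset.single_le_sum (f := fun i : Fin n => ∑ j, |A i j|)
          (fun i _ => Finset.sum_nonneg fun j _ => abs_nonneg _) (Finset.mem_univ i)



lemma tv_key (n : ℕ) (Flim : Matrix (Fin n) (Fin n) ℝ)
    (hρ : spectralRadius ℂ (Flim.map (Complex.ofReal)) < 1) :
    ∃ (m : ℕ) (θ : ℝ), 1 ≤ m ∧ 0 < θ ∧ θ < 1 ∧
      ∀ x : Fin n → ℝ, ‖(Flim ^ m).mulVec x‖ ≤ θ ^ m * ‖x‖ := by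
  set T := toEuclideanCLM (𝕜 := ℂ) (Flim.map Complex.ofReal) with hTdef
  have hspec : spectralRadius ℂ T = spectralRadius ℂ (Flim.map Complex.ofReal) := by
    unfold spectralRadius
    rw [AlgEquiv.spectrum_eq (Matrix.toEuclideanCLM (𝕜 := ℂ) (n := Fin n))]
  have hT : spectralRadius ℂ T < 1 := hspec ▸ hρ
  obtain ⟨t, ht1, ht2⟩ := ENNReal.lt_iff_exists_nnreal_btwn.mp hT
  set tr : ℝ := (t : ℝ) with htr
  have htr0 : 0 ≤ tr := t.coe_nonneg
  have htr1 : tr < 1 := by exact_mod_cast ht2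
  set s : ℝ := (tr + 1) / 2 with hs
  have hts : tr < s := by rw [hs]; linarith
  have hs1 : s < 1 := by rw [hs]; linarith
  have hs0 : 0 < s := by rw [hs]; linarith
  have hgel := spectrum.pow_nnnorm_pow_one_div_tendsto_nhds_spectralRadius T
  have E1 : ∀ᶠ m : ℕ in atTop, (‖T ^ m‖₊ : ℝ≥0∞) ^ (1 / (m:ℝ)) < (t : ℝ≥0∞) :=
    hgel.eventually_lt_const ht1
  have hdiv : 0 ≤ tr / s := div_nonneg htr0 hs0.le
  have hdiv1 : tr / s < 1 := (div_lt_one hs0).mpr hts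
  have E2 : ∀ᶠ m : ℕ in atTop, (n : ℝ) * (tr / s) ^ m < 1 := by
    have h0 : Tendsto (fun m : ℕ => (n : ℝ) * (tr / s) ^ m) atTop (𝓝 ((n:ℝ) * 0)) :=
      (tendsto_pow_atTop_nhds_zero_of_lt_one hdiv hdiv1).const_mul _
    rw [mul_zero] at h0
    exact h0.eventually_lt_const one_pos
  obtain ⟨m, hm1, hE1, hE2⟩ := ((eventually_ge_atTop 1).and (E1.and E2)).exists
  have hm0 : (m : ℝ) ≠ 0 := Nat.cast_ne_zero.mpr (by omega)
  -- ‖T ^ m‖ ≤ tr ^ m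
  have hTm : ‖T ^ m‖ ≤ tr ^ m := by
    have hx : (‖T ^ m‖₊ : ℝ≥0∞) < (t : ℝ≥0∞) ^ m := by
      calc (‖T ^ m‖₊ : ℝ≥0∞) = ((‖T ^ m‖₊ : ℝ≥0∞) ^ (1 / (m:ℝ))) ^ (m : ℕ) := by
            rw [← ENNReal.rpow_natCast ((‖T ^ m‖₊ : ℝ≥0∞) ^ (1 / (m:ℝ))) m,
              ← ENNReal.rpow_mul, one_div, inv_mul_cancel₀ hm0, ENNReal.rpow_one]
        _ < (t : ℝ≥0∞) ^ m := ENNReal.pow_lt_pow_left (Nat.one_le_iff_ne_zero.mp hm1) hE1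
    rw [← ENNReal.coe_pow] at hx
    have h5 : ‖T ^ m‖₊ < t ^ m := by exact_mod_cast hx
    have h6 : (‖T ^ m‖₊ : ℝ) ≤ ((t ^ m : NNReal) : ℝ) := by exact_mod_cast h5.le
    rw [← coe_nnnorm]
    refine h6.trans (le_of_eq ?_)
    push_cast
    rfl
  refine ⟨m, s, hm1, hs0, hs1, fun x => ?_⟩
  have hmap : toEuclideanCLM (𝕜 := ℂ) ((Flim ^ m).map Complex.ofReal) = T ^ m := by
    have h1 : (Flim ^ m).map (Complex.ofReal) = (Flim.map Complex.ofReal) ^ m := by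
      have := map_pow (Complex.ofRealHom.mapMatrix (m := Fin n)) Flim m
      simp only [RingHom.mapMatrix_apply] at this
      exact this
    rw [h1, map_pow]
  have h2 := tv_mulVec_le n (Flim ^ m) x
  rw [hmap] at h2
  refine h2.trans (mul_le_mul_of_nonneg_right ?_ (norm_nonneg x))
  calc (n : ℝ) * ‖T ^ m‖ ≤ (n : ℝ) * tr ^ m :=
        mul_le_mul_of_nonneg_left hTm (Nat.cast_nonneg n)
    _ ≤ s ^ m := by
        have hsm : 0 < s ^ m := pow_pos hs0 m
        rw [div_pow] at hE2
        rw [mul_div_assoc'] at hE2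
        exact le_of_lt ((div_lt_one hsm).mp hE2)

lemma tv_main_aux (n : ℕ)
    (F : ℕ → Matrix (Fin n) (Fin n) ℝ) (Flim : Matrix (Fin n) (Fin n) ℝ)
    (hconv : Tendsto F atTop (𝓝 Flim))
    (hρ : spectralRadius ℂ (Flim.map (Complex.ofReal)) < 1)
    (e u : ℕ → (Fin n → ℝ)) (cu : ℝ) (hcu : 0 ≤ cu) (hu : ∀ k, ‖u k‖ ≤ cu)
    (hrec : ∀ k, e (k + 1) = (F (k + 1)).mulVec (e k) + u (k + 1)) :
    ∃ a b C : ℝ, 0 ≤ a ∧ 0 ≤ b ∧ b < 1 ∧ 0 ≤ C ∧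
      ∀ k, ‖e k‖ ≤ a * b ^ k + C * cu := by
  obtain ⟨m, θ, hm1, hθ0, hθ1, hcontr⟩ := tv_key n Flim hρ
  obtain ⟨p, rfl⟩ : ∃ p, m = p + 1 := ⟨m - 1, by omega⟩
  set m := p + 1
  -- the adapted "norm"
  set N : (Fin n → ℝ) → ℝ := fun x => ∑ j ∈ Finset.range m, ‖(Flim ^ j).mulVec x‖ / θ ^ j
    with hNdef
  have hterm_nonneg : ∀ (x : Fin n → ℝ) (j : ℕ), 0 ≤ ‖(Flim ^ j).mulVec x‖ / θ ^ j :=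
    fun x j => div_nonneg (norm_nonneg _) (pow_nonneg hθ0.le j)
  have hN_nonneg : ∀ x, 0 ≤ N x := fun x =>
    Finset.sum_nonneg fun j _ => hterm_nonneg x j
  have hN0 : ∀ x, ‖x‖ ≤ N x := by
    intro x
    have h0 : ‖(Flim ^ 0).mulVec x‖ / θ ^ 0 = ‖x‖ := by
      simp [Matrix.one_mulVec]
    calc ‖x‖ = ‖(Flim ^ 0).mulVec x‖ / θ ^ 0 := h0.symm
      _ ≤ N x := Finset.single_le_sum (fun j _ => hterm_nonneg x j)
            (Finset.mem_range.mpr (by omega))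
  set M : ℝ := ∑ j ∈ Finset.range m, (∑ i', ∑ j', |(Flim ^ j) i' j'|) / θ ^ j with hMdef
  have hM0 : 0 ≤ M :=
    Finset.sum_nonneg fun j _ => div_nonneg
      (Finset.sum_nonneg fun _ _ => Finset.sum_nonneg fun _ _ => abs_nonneg _)
      (pow_nonneg hθ0.le j)
  have hNle : ∀ x, N x ≤ M * ‖x‖ := by
    intro x
    rw [hMdef, Finset.sum_mul]
    refine Finset.sum_le_sum fun j _ => ?_
    rw [div_mul_eq_mul_div]
    gcongr
    exact tv_mulVec_le' n _ x
  have hNadd : ∀ x y, N (x + y) ≤ N x + N y := by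
    intro x y
    rw [hNdef, ← Finset.sum_add_distrib]
    refine Finset.sum_le_sum fun j _ => ?_
    rw [Matrix.mulVec_add, ← add_div]
    gcongr
    exact norm_add_le _ _
  have hNcontr : ∀ x, N (Flim.mulVec x) ≤ θ * N x := by
    intro x
    have hpow : ∀ j : ℕ, (Flim ^ j).mulVec (Flim.mulVec x) = (Flim ^ (j+1)).mulVec x := by
      intro j
      rw [Matrix.mulVec_mulVec, ← pow_succ]
    have hLHS : N (Flim.mulVec x) =
        (∑ j ∈ Finset.range p, ‖(Flim ^ (j+1)).mulVec x‖ / θ ^ j)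
          + ‖(Flim ^ m).mulVec x‖ / θ ^ p := by
      simp only [hNdef, hpow]
      rw [Finset.sum_range_succ]
    have hRHS : θ * N x = θ * ‖x‖ +
        ∑ j ∈ Finset.range p, ‖(Flim ^ (j+1)).mulVec x‖ / θ ^ j := by
      simp only [hNdef]
      rw [Finset.sum_range_succ', mul_add]
      have e1 : θ * (‖(Flim ^ 0).mulVec x‖ / θ ^ 0) = θ * ‖x‖ := by
        simp [Matrix.one_mulVec]
      have e2 : θ * ∑ k ∈ Finset.range p, ‖(Flim ^ (k+1)).mulVec x‖ / θ ^ (k+1)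
          = ∑ j ∈ Finset.range p, ‖(Flim ^ (j+1)).mulVec x‖ / θ ^ j := by
        rw [Finset.mul_sum]
        refine Finset.sum_congr rfl fun j _ => ?_
        rw [pow_succ]
        field_simp
        ring
      rw [e1, e2]
      ring
    rw [hLHS, hRHS]
    have hlast : ‖(Flim ^ m).mulVec x‖ / θ ^ p ≤ θ * ‖x‖ := by
      rw [div_le_iff₀ (pow_pos hθ0 p)]
      calc ‖(Flim ^ m).mulVec x‖ ≤ θ ^ m * ‖x‖ := hcontr x
        _ = θ * ‖x‖ * θ ^ p := by rw [pow_succ]; ring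
    linarith
  -- convergence of the perturbation size
  set d : ℕ → ℝ := fun k => ∑ i, ∑ j, |F k i j - Flim i j| with hddef
  have hd0 : ∀ k, 0 ≤ d k := fun k =>
    Finset.sum_nonneg fun _ _ => Finset.sum_nonneg fun _ _ => abs_nonneg _
  have hdtend : Tendsto d atTop (𝓝 0) := by
    have hentry : ∀ i j, Tendsto (fun k => |F k i j - Flim i j|) atTop (𝓝 0) := by
      intro i j
      have h1 : Tendsto (fun k => F k i j) atTop (𝓝 (Flim i j)) := by
        have := (continuous_apply j).comp (continuous_apply (A := fun _ : Fin n => Fin n → ℝ) i)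
        exact (this.tendsto Flim).comp hconv
      have h2 := (h1.sub (tendsto_const_nhds : Tendsto (fun _ : ℕ => Flim i j) atTop (𝓝 (Flim i j)))).abs
      simpa using h2
    have := tendsto_finset_sum (Finset.univ : Finset (Fin n))
      (fun i _ => tendsto_finset_sum (Finset.univ : Finset (Fin n))
        (fun j _ => hentry i j))
    simpa using this
  have hpert : ∀ k x, N ((F k).mulVec x) ≤ (θ + M * d k) * N x := by
    intro k x
    have hsplit : (F k).mulVec x = Flim.mulVec x + (F k - Flim).mulVec x := by
      rw [Matrix.sub_mulVec]; abel
    calc N ((F k).mulVec x) ≤ N (Flim.mulVec x) + N ((F k - Flim).mulVec x) := by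
          rw [hsplit]; exact hNadd _ _
      _ ≤ θ * N x + M * ‖(F k - Flim).mulVec x‖ := by
          gcongr
          · exact hNcontr x
          · exact hNle _
      _ ≤ θ * N x + M * (d k * ‖x‖) := by
          gcongr
          refine (tv_mulVec_le' n _ x).trans (le_of_eq ?_)
          simp [hddef, Matrix.sub_apply]
      _ ≤ θ * N x + M * (d k * N x) := by
          have h7 : d k * ‖x‖ ≤ d k * N x := mul_le_mul_of_nonneg_left (hN0 x) (hd0 k)
          have h8 := mul_le_mul_of_nonneg_left h7 hM0
          linarith
      _ = (θ + M * d k) * N x := by ring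
  -- choose contraction rate β and threshold N0
  obtain ⟨β, hβθ, hβ1⟩ : ∃ β : ℝ, θ < β ∧ β < 1 := ⟨(1 + θ) / 2, by linarith, by linarith⟩
  have hβ0 : 0 < β := lt_trans hθ0 hβθ
  have hev : ∀ᶠ k in atTop, M * d k < β - θ := by
    have h9 : Tendsto (fun k => M * d k) atTop (𝓝 (M * 0)) := hdtend.const_mul M
    rw [mul_zero] at h9
    exact h9.eventually_lt_const (by linarith)
  obtain ⟨K, hK⟩ := hev.exists_forall_of_atTop
  have hcontr' : ∀ k, K ≤ k → ∀ x, N ((F k).mulVec x) ≤ β * N x := by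
    intro k hk x
    refine (hpert k x).trans ?_
    have := hK k hk
    have := hN_nonneg x
    nlinarith
  -- the recursion bound
  have hstep : ∀ k, K ≤ k → N (e (k + 1)) ≤ β * N (e k) + M * cu := by
    intro k hk
    rw [hrec k]
    calc N ((F (k+1)).mulVec (e k) + u (k+1))
        ≤ N ((F (k+1)).mulVec (e k)) + N (u (k+1)) := hNadd _ _
      _ ≤ β * N (e k) + M * cu := by
          have h10 := hcontr' (k+1) (by omega) (e k)
          have h11 : N (u (k+1)) ≤ M * cu := by
            refine (hNle _).trans ?_
            exact mul_le_mul_of_nonneg_left (hu (k+1)) hM0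
          linarith
  obtain ⟨S, hSdef⟩ : ∃ S : ℝ, S = M * cu / (1 - β) := ⟨_, rfl⟩
  have hS0 : 0 ≤ S := by
    rw [hSdef]
    exact div_nonneg (mul_nonneg hM0 hcu) (by linarith)
  have hSfix : β * S + M * cu = S := by
    have h1mβ : (1:ℝ) - β ≠ 0 := by linarith
    rw [hSdef]
    field_simp
    ring
  have hind : ∀ k, K ≤ k → N (e k) ≤ β ^ (k - K) * N (e K) + S := by
    intro k hk
    induction k, hk using Nat.le_induction with
    | base =>
      simp only [Nat.sub_self, pow_zero, one_mul]
      linarith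
    | succ k hk ih =>
      have h12 := hstep k hk
      have hkk : k + 1 - K = (k - K) + 1 := by omega
      have h13 : β * (β ^ (k - K) * N (e K) + S) + M * cu
          = β ^ (k + 1 - K) * N (e K) + S := by
        calc β * (β ^ (k - K) * N (e K) + S) + M * cu
            = β ^ (k - K) * β * N (e K) + (β * S + M * cu) := by ring
          _ = β ^ (k + 1 - K) * N (e K) + S := by rw [hSfix, hkk, pow_succ]
      calc N (e (k+1)) ≤ β * N (e k) + M * cu := h12
        _ ≤ β * (β ^ (k - K) * N (e K) + S) + M * cu := by
            have := mul_le_mul_of_nonneg_left ih hβ0.le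
            linarith
        _ = β ^ (k + 1 - K) * N (e K) + S := h13
  -- assemble the final constants
  obtain ⟨Q, hQdef⟩ : ∃ Q : ℝ, Q = N (e K) := ⟨_, rfl⟩
  have hQ0 : 0 ≤ Q := hQdef ▸ hN_nonneg _
  obtain ⟨P, hPdef⟩ : ∃ P : ℝ, P = (∑ k ∈ Finset.range K, ‖e k‖) + Q := ⟨_, rfl⟩
  have hP0 : 0 ≤ P := by
    rw [hPdef]
    exact add_nonneg (Finset.sum_nonneg fun _ _ => norm_nonneg _) hQ0
  have hQP : Q ≤ P := by
    rw [hPdef]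
    have : (0:ℝ) ≤ ∑ k ∈ Finset.range K, ‖e k‖ :=
      Finset.sum_nonneg fun _ _ => norm_nonneg _
    linarith
  have hβK : 0 < β ^ K := pow_pos hβ0 K
  refine ⟨P / β ^ K, β, M / (1 - β), div_nonneg hP0 hβK.le, hβ0.le, hβ1,
    div_nonneg hM0 (by linarith), fun k => ?_⟩
  have hCS : M / (1 - β) * cu = S := by rw [hSdef]; ring
  rw [hCS]
  rcases lt_or_ge k K with hkK | hkK
  · -- initial segment
    have h14 : ‖e k‖ ≤ P := by
      rw [hPdef]
      have h15 : ‖e k‖ ≤ ∑ j ∈ Finset.range K, ‖e j‖ :=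
        Finset.single_le_sum (f := fun j => ‖e j‖) (fun _ _ => norm_nonneg _)
          (Finset.mem_range.mpr hkK)
      linarith
    have h16 : β ^ K ≤ β ^ k := pow_le_pow_of_le_one hβ0.le hβ1.le (by omega)
    have h17 : P ≤ P / β ^ K * β ^ k := by
      rw [div_mul_eq_mul_div, le_div_iff₀ hβK]
      exact mul_le_mul_of_nonneg_left h16 hP0
    linarith
  · -- tail
    have h18 := hind k hkK
    rw [← hQdef] at h18
    have h19 : β ^ (k - K) * Q ≤ P / β ^ K * β ^ k := by
      have h20 : β ^ K * β ^ (k - K) = β ^ k := by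
        rw [← pow_add]
        congr 1
        omega
      rw [div_mul_eq_mul_div, le_div_iff₀ hβK]
      calc β ^ (k - K) * Q * β ^ K = (β ^ K * β ^ (k - K)) * Q := by ring
        _ = β ^ k * Q := by rw [h20]
        _ ≤ P * β ^ k := by
            have := mul_le_mul_of_nonneg_left hQP (pow_pos hβ0 k).le
            linarith
    have h21 := hN0 (e k)
    linarith

/-- Let `F_k → F` with `ρ(F) < 1`. Then the time-varying system
`e(k) = F_k e(k−1) + u(k)` with uniformly bounded inputs `‖u(k)‖ ≤ c_u` satisfies
`‖e(k)‖ ≤ a bᵏ + c` for some `a ≥ 0`, `0 ≤ b < 1`, `c ≥ 0`; if moreover `u ≡ 0`,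
then `‖e(k)‖ ≤ a bᵏ`. -/
theorem time_varying_exponential_bound (n : ℕ)
    (F : ℕ → Matrix (Fin n) (Fin n) ℝ) (Flim : Matrix (Fin n) (Fin n) ℝ)
    (hconv : Tendsto F atTop (𝓝 Flim))
    (hρ : spectralRadius ℂ (Flim.map (Complex.ofReal)) < 1)
    (e u : ℕ → (Fin n → ℝ)) (cu : ℝ) (hu : ∀ k, ‖u k‖ ≤ cu)
    (hrec : ∀ k, e (k + 1) = (F (k + 1)).mulVec (e k) + u (k + 1)) :
    (∃ a b c : ℝ, 0 ≤ a ∧ 0 ≤ b ∧ b < 1 ∧ 0 ≤ c ∧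
        ∀ k, ‖e k‖ ≤ a * b ^ k + c) ∧
      ((∀ k, u k = 0) → ∃ a b : ℝ, 0 ≤ a ∧ 0 ≤ b ∧ b < 1 ∧
        ∀ k, ‖e k‖ ≤ a * b ^ k) := by
  constructor
  · obtain ⟨a, b, C, ha, hb, hb1, hC, hbound⟩ :=
      tv_main_aux n F Flim hconv hρ e u (max cu 0) (le_max_right _ _)
        (fun k => (hu k).trans (le_max_left _ _)) hrec
    exact ⟨a, b, C * max cu 0, ha, hb, hb1, mul_nonneg hC (le_max_right _ _), hbound⟩
  · intro hu0
    obtain ⟨a, b, C, ha, hb, hb1, hC, hbound⟩ :=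
      tv_main_aux n F Flim hconv hρ e u 0 le_rfl (fun k => by simp [hu0 k]) hrec
    exact ⟨a, b, ha, hb, hb1, fun k => by simpa using hbound k⟩
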